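/- Every connected finite graph (possibly with loops and multi-edges) in which either some loop exists, or some 3-cycle exists, contains a 'maximal tree with 1- or 3-cycle': a subset of edges consisting of a maximal (spanning) tree together with one additional edge that is either a loop or forms a 3-cycle with two tree edges. -/

import Mathlib

/-- Two vertices are joined by an edge from the set `S` of edges of a multigraph
with edge-endpoint map `ends`. -/
def EdgeStep {V E : Type} (ends : E → Sym2 V) (S : Set E) (u v : V) : Prop :=
  ∃ e ∈ S, ends e = s(u, v)

/-- The edge set `S` connects the whole vertex set. (The step relation is symmetric
since `s(u,v) = s(v,u)`, so its reflexive-transitive closure is the reachability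
relation.) -/
def ConnectsAll {V E : Type} (ends : E → Sym2 V) (S : Set E) : Prop :=
  ∀ u v : V, Relation.ReflTransGen (EdgeStep ends S) u v

/-- A spanning (maximal) tree of a connected finite multigraph: a set of edges that
connects all vertices and has exactly `|V| - 1` edges. -/
def IsSpanningTree {V E : Type} [Fintype V] (ends : E → Sym2 V) (T : Finset E) : Prop :=
  ConnectsAll ends (↑T : Set E) ∧ T.card = Fintype.card V - 1

/-- The edge `e` forms a 3-cycle together with two edges of `T`. -/
def FormsThreeCycle {V E : Type} (ends : E → Sym2 V) (T : Finset E) (e : E) : Prop :=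
  ∃ u v w : V, u ≠ v ∧ v ≠ w ∧ u ≠ w ∧ ends e = s(u, v) ∧
    ∃ e₁ ∈ T, ∃ e₂ ∈ T, ends e₁ = s(v, w) ∧ ends e₂ = s(w, u)

private lemma edgeStep_symm {V E : Type} (ends : E → Sym2 V) (S : Set E) :
    Symmetric (EdgeStep ends S) := by
  rintro u v ⟨e, he, hends⟩
  exact ⟨e, he, by rw [hends, Sym2.eq_swap]⟩

private lemma crossing {V E : Type} (ends : E → Sym2 V) (C : Finset V)
    {x z : V} (h : Relation.ReflTransGen (EdgeStep ends (Set.univ : Set E)) x z)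
    (hx : x ∈ C) (hz : z ∉ C) :
    ∃ e a b, ends e = s(a, b) ∧ a ∈ C ∧ b ∉ C := by
  revert hx
  induction h using Relation.ReflTransGen.head_induction_on with
  | refl => exact fun hx => absurd hx hz
  | head step _ ih =>
    intro hx
    rename_i p q hq
    by_cases hqC : q ∈ C
    · exact ih hqC
    · obtain ⟨e, _, he⟩ := step
      exact ⟨e, p, q, he, hx, hqC⟩

private lemma grow {V E : Type} [Fintype V] [Fintype E] (ends : E → Sym2 V)
    (hconn : ConnectsAll ends (Set.univ : Set E)) :
    ∀ (n : ℕ) (C : Finset V) (T : Finset E),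
      Fintype.card V - C.card = n →
      C.Nonempty →
      (∀ f ∈ T, ∀ x ∈ ends f, x ∈ C) →
      T.card = C.card - 1 →
      (∀ x ∈ C, ∀ y ∈ C, Relation.ReflTransGen (EdgeStep ends (↑T : Set E)) x y) →
      ∃ T' : Finset E, T ⊆ T' ∧ IsSpanningTree ends T' ∧
        ∀ f ∈ T', f ∈ T ∨ ∃ a b, ends f = s(a, b) ∧ a ≠ b ∧ b ∉ C := by
  classical
  intro n
  induction n with
  | zero =>
    intro C T hn hne hends hcard hc
    have hle : C.card ≤ Fintype.card V := Finset.card_le_univ C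
    have hCuniv : C = Finset.univ := Finset.eq_univ_of_card C (by omega)
    refine ⟨T, le_refl T, ⟨fun u v => hc u (by simp [hCuniv]) v (by simp [hCuniv]),
      by omega⟩, fun f hf => Or.inl hf⟩
  | succ n ih =>
    intro C T hn hne hends hcard hc
    have hlt : C.card < Fintype.card V := by
      have := Finset.card_le_univ C; omega
    have hz : ∃ z, z ∉ C := by
      by_contra h
      push_neg at h
      have : C = Finset.univ := Finset.eq_univ_iff_forall.2 h
      simp [this] at hlt
    obtain ⟨z, hz⟩ := hz
    obtain ⟨r, hr⟩ := hne
    obtain ⟨e, a, b, he, ha, hb⟩ := crossing ends C (hconn r z) hr hz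
    have heT : e ∉ T := fun h => hb (hends e h b (by rw [he]; simp))
    have hcardC : 1 ≤ C.card := Finset.card_pos.2 ⟨r, hr⟩
    have hCins : (insert b C).card = C.card + 1 := Finset.card_insert_of_notMem hb
    have hstep : EdgeStep ends (↑(insert e T) : Set E) a b :=
      ⟨e, by simp, he⟩
    have hmono : ∀ x y, Relation.ReflTransGen (EdgeStep ends (↑T : Set E)) x y →
        Relation.ReflTransGen (EdgeStep ends (↑(insert e T) : Set E)) x y := by
      intro x y h
      refine Relation.ReflTransGen.mono ?_ x y h
      rintro p q ⟨f, hf, hends'⟩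
      exact ⟨f, by simp at hf ⊢; exact Or.inr hf, hends'⟩
    have hreach : ∀ x ∈ C, Relation.ReflTransGen (EdgeStep ends (↑(insert e T) : Set E)) x b :=
      fun x hx => (hmono x a (hc x hx a ha)).tail hstep
    have symmR := fun {x y : V} (h : Relation.ReflTransGen (EdgeStep ends (↑(insert e T) : Set E)) x y) =>
      (@Relation.ReflTransGen.stdSymm _ _ ⟨fun a b h => edgeStep_symm ends _ h⟩).symm x y h
    have hc' : ∀ x ∈ insert b C, ∀ y ∈ insert b C,
        Relation.ReflTransGen (EdgeStep ends (↑(insert e T) : Set E)) x y := by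
      intro x hx y hy
      rcases Finset.mem_insert.1 hx with hx | hx <;>
        rcases Finset.mem_insert.1 hy with hy | hy
      · rw [hx, hy]
      · rw [hx]; exact symmR (hreach y hy)
      · rw [hy]; exact hreach x hx
      · exact hmono x y (hc x hx y hy)
    obtain ⟨T', hsub, hst, hextra⟩ := ih (insert b C) (insert e T)
      (by omega)
      ⟨b, Finset.mem_insert_self b C⟩
      (by
        intro f hf x hxf
        rcases Finset.mem_insert.1 hf with rfl | hf
        · rw [he] at hxf
          rcases Sym2.mem_iff.1 hxf with rfl | rfl
          · exact Finset.mem_insert_of_mem ha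
          · exact Finset.mem_insert_self x C
        · exact Finset.mem_insert_of_mem (hends f hf x hxf))
      (by rw [Finset.card_insert_of_notMem heT]; omega)
      hc'
    refine ⟨T', fun f hf => hsub (Finset.mem_insert_of_mem hf), hst, ?_⟩
    intro f hf
    rcases hextra f hf with hf' | ⟨a', b', h1, h2, h3⟩
    · rcases Finset.mem_insert.1 hf' with rfl | hf'
      · exact Or.inr ⟨a, b, he, fun h => hb (h ▸ ha), hb⟩
      · exact Or.inl hf'
    · exact Or.inr ⟨a', b', h1, h2, fun h => h3 (Finset.mem_insert_of_mem h)⟩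

/-- every connected finite multigraph (loops and parallel edges allowed)
containing a loop or a 3-cycle contains a "maximal tree with 1- or 3-cycle":
a spanning tree `T` together with one extra edge `e` that is a loop or forms a
3-cycle with two edges of `T`. -/
theorem exists_maximal_tree_with_one_or_three_cycle
    {V E : Type} [Fintype V] [Nonempty V] [Fintype E]
    (ends : E → Sym2 V)
    (hconn : ConnectsAll ends (Set.univ : Set E))
    (hcyc : (∃ e : E, (ends e).IsDiag) ∨
      (∃ (u v w : V) (e₁ e₂ e₃ : E), u ≠ v ∧ v ≠ w ∧ u ≠ w ∧
        ends e₁ = s(u, v) ∧ ends e₂ = s(v, w) ∧ ends e₃ = s(w, u))) :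
    ∃ (T : Finset E) (e : E), e ∉ T ∧ IsSpanningTree ends T ∧
      ((ends e).IsDiag ∨ FormsThreeCycle ends T e) := by
  classical
  rcases hcyc with ⟨e, hdiag⟩ | ⟨u, v, w, e₁, e₂, e₃, huv, hvw, huw, h1, h2, h3⟩
  · obtain ⟨v₀⟩ := (inferInstance : Nonempty V)
    obtain ⟨T', hsub, hst, hextra⟩ := grow ends hconn (Fintype.card V - 1) {v₀} ∅
      (by simp) ⟨v₀, by simp⟩ (by simp) (by simp)
      (by intro x hx y hy; simp at hx hy; rw [hx, hy])
    refine ⟨T', e, ?_, hst, Or.inl hdiag⟩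
    intro heT
    rcases hextra e heT with h | ⟨a, b, hab, hne, _⟩
    · simp at h
    · rw [hab] at hdiag
      exact hne (by simpa using hdiag)
  · have he23 : e₂ ≠ e₃ := by
      intro h
      have : s(v, w) = s(w, u) := by rw [← h2, h, h3]
      rcases Sym2.eq_iff.1 this with ⟨h', _⟩ | ⟨h', _⟩
      · exact hvw h'
      · exact huv h'.symm
    set C : Finset V := {u, v, w} with hCdef
    set T : Finset E := {e₂, e₃} with hTdef
    have hCcard : C.card = 3 := by
      rw [hCdef, Finset.card_insert_of_notMem (by simp [huv, huw]),
        Finset.card_insert_of_notMem (by simp [hvw]), Finset.card_singleton]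
    have hTcard : T.card = 2 := by
      rw [hTdef, Finset.card_insert_of_notMem (by simp [he23]), Finset.card_singleton]
    have s_vw : EdgeStep ends (↑T : Set E) v w := ⟨e₂, by simp [hTdef], h2⟩
    have s_wu : EdgeStep ends (↑T : Set E) w u := ⟨e₃, by simp [hTdef], h3⟩
    have symmR := fun {x y : V} (h : Relation.ReflTransGen (EdgeStep ends (↑T : Set E)) x y) =>
      (@Relation.ReflTransGen.stdSymm _ _ ⟨fun a b h => edgeStep_symm ends _ h⟩).symm x y h
    have r_wu := Relation.ReflTransGen.single s_wu
    have r_vu := (Relation.ReflTransGen.single s_vw).trans r_wu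
    have hto : ∀ x ∈ C, Relation.ReflTransGen (EdgeStep ends (↑T : Set E)) x u := by
      intro x hx
      simp only [hCdef, Finset.mem_insert, Finset.mem_singleton] at hx
      rcases hx with rfl | rfl | rfl
      · exact Relation.ReflTransGen.refl
      · exact r_vu
      · exact r_wu
    obtain ⟨T', hsub, hst, hextra⟩ := grow ends hconn (Fintype.card V - 3) C T
      (by omega) ⟨u, by simp [hCdef]⟩
      (by
        intro f hf x hxf
        simp only [hTdef, Finset.mem_insert, Finset.mem_singleton] at hf
        rcases hf with rfl | rfl
        · rw [h2] at hxf
          rcases Sym2.mem_iff.1 hxf with rfl | rfl <;> simp [hCdef]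
        · rw [h3] at hxf
          rcases Sym2.mem_iff.1 hxf with rfl | rfl <;> simp [hCdef])
      (by omega)
      (fun x hx y hy => (hto x hx).trans (symmR (hto y hy)))
    refine ⟨T', e₁, ?_, hst, Or.inr ⟨u, v, w, huv, hvw, huw, h1,
      e₂, hsub (by simp [hTdef]), e₃, hsub (by simp [hTdef]), h2, h3⟩⟩
    intro h
    rcases hextra e₁ h with h' | ⟨a, b, hab, _, hbC⟩
    · simp only [hTdef, Finset.mem_insert, Finset.mem_singleton] at h'
      rcases h' with rfl | rfl
      · rcases Sym2.eq_iff.1 (h1.symm.trans h2) with ⟨h', _⟩ | ⟨h', _⟩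
        · exact huv h'
        · exact huw h'
      · rcases Sym2.eq_iff.1 (h1.symm.trans h3) with ⟨h', _⟩ | ⟨_, h'⟩
        · exact huw h'
        · exact hvw h'
    · rcases Sym2.eq_iff.1 (h1.symm.trans hab) with ⟨_, h'⟩ | ⟨h', _⟩
      · exact hbC (by simp [hCdef, ← h'])
      · exact hbC (by simp [hCdef, ← h'])
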